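/- For every infinite cardinal ℵ and every index set S with |S| > 2^ℵ, the product space [0,1]^S has property (III_ℵ) but has density strictly greater than ℵ. -/

import Mathlib

universe u

open Cardinal

/-- Property (I_ℵ): every locally finite family of nonempty open sets has cardinality ≤ ℵ. -/
def PropI (c : Cardinal.{u}) (X : Type u) [TopologicalSpace X] : Prop :=
  ∀ (I : Type u) (U : I → Set X), (∀ i, IsOpen (U i)) → (∀ i, (U i).Nonempty) →
    LocallyFinite U → #I ≤ c

/-- Property (II_ℵ): every pointwise finite family of nonempty open sets has cardinality ≤ ℵ. -/
def PropII (c : Cardinal.{u}) (X : Type u) [TopologicalSpace X] : Prop :=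
  ∀ (I : Type u) (U : I → Set X), (∀ i, IsOpen (U i)) → (∀ i, (U i).Nonempty) →
    (∀ x : X, {i | x ∈ U i}.Finite) → #I ≤ c

/-- Property (III_ℵ): every ℵ-pointwise family of nonempty open sets has cardinality ≤ ℵ. -/
def PropIII (c : Cardinal.{u}) (X : Type u) [TopologicalSpace X] : Prop :=
  ∀ (I : Type u) (U : I → Set X), (∀ i, IsOpen (U i)) → (∀ i, (U i).Nonempty) →
    (∀ x : X, #{i | x ∈ U i} ≤ c) → #I ≤ c

lemma fiber_le {α β : Type u} (f : α → β) (c : Cardinal.{u}) (hc : Cardinal.aleph0 ≤ c)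
    (h1 : #β ≤ c) (h2 : ∀ b, #(f ⁻¹' {b}) ≤ c) : #α ≤ c := by
  have : (Set.univ : Set α) = ⋃ b, f ⁻¹' {b} := by
    ext x; simp
  calc #α = #(Set.univ : Set α) := Cardinal.mk_univ.symm
    _ = #(⋃ b, f ⁻¹' {b}) := by rw [this]
    _ ≤ #β * ⨆ b, #(f ⁻¹' {b}) := Cardinal.mk_iUnion_le _
    _ ≤ c * c := by
        apply mul_le_mul' h1 (ciSup_le' h2)
    _ = c := Cardinal.mul_eq_self hc

lemma delta_fixed_card {α : Type u} [DecidableEq α] (c : Cardinal.{u}) (hc : Cardinal.aleph0 ≤ c) :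
    ∀ (n : ℕ) (A : Set (Finset α)), (∀ F ∈ A, F.card = n) → c < #A →
      ∃ (R : Finset α) (B : Set (Finset α)), B ⊆ A ∧ c < #B ∧
        ∀ F ∈ B, ∀ G ∈ B, F ≠ G → F ∩ G = R := by
  classical
  intro n
  induction n with
  | zero =>
    intro A hcard hA
    exfalso
    have : A ⊆ {∅} := by
      intro F hF; simp [Finset.card_eq_zero.mp (hcard F hF)]
    have : #A ≤ 1 := le_trans (Cardinal.mk_le_mk_of_subset this) (by simp)
    exact absurd (lt_of_lt_of_le hA (this.trans (le_trans Cardinal.one_le_aleph0 hc))) (lt_irrefl c)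
  | succ n ih =>
    intro A hcard hA
    by_cases hx : ∃ x, c < #{F | F ∈ A ∧ x ∈ F}
    · obtain ⟨x, hx⟩ := hx
      set A1 : Set (Finset α) := {F | F ∈ A ∧ x ∈ F} with hA1
      have hinj : Set.InjOn (fun F => F.erase x) A1 := by
        intro F hF G hG h
        simp only at h
        rw [← Finset.insert_erase hF.2, ← Finset.insert_erase hG.2, h]
      set A' := (fun F => F.erase x) '' A1 with hA'
      have hA'card : ∀ F ∈ A', F.card = n := by
        rintro _ ⟨F, hF, rfl⟩
        rw [Finset.card_erase_of_mem hF.2, hcard F hF.1]; rfl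
      have hA'big : c < #A' := by
        rwa [Cardinal.mk_image_eq_of_injOn _ _ hinj]
      obtain ⟨R', B', hB'sub, hB'big, hB'Δ⟩ := ih A' hA'card hA'big
      refine ⟨insert x R', {F | F ∈ A1 ∧ F.erase x ∈ B'}, fun F hF => hF.1.1, ?_, ?_⟩
      · have hsub : B' ⊆ (fun F => F.erase x) '' {F | F ∈ A1 ∧ F.erase x ∈ B'} := by
          intro G hG
          obtain ⟨F, hF, rfl⟩ := hB'sub hG
          exact ⟨F, ⟨hF, hG⟩, rfl⟩
        calc c < #B' := hB'big
          _ ≤ #((fun F => F.erase x) '' {F | F ∈ A1 ∧ F.erase x ∈ B'}) :=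
              Cardinal.mk_le_mk_of_subset hsub
          _ ≤ #{F | F ∈ A1 ∧ F.erase x ∈ B'} := Cardinal.mk_image_le
      · rintro F ⟨hF1, hF2⟩ G ⟨hG1, hG2⟩ hFG
        have hne : F.erase x ≠ G.erase x := fun h => hFG (hinj hF1 hG1 h)
        have hroot := hB'Δ _ hF2 _ hG2 hne
        ext a
        rcases eq_or_ne a x with rfl | ha
        · simp [hF1.2, hG1.2]
        · have := Finset.ext_iff.mp hroot a
          simp only [Finset.mem_inter, Finset.mem_erase] at this
          simp only [Finset.mem_inter, Finset.mem_insert, ha, false_or]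
          constructor
          · intro h; exact this.mp ⟨⟨ha, h.1⟩, ⟨ha, h.2⟩⟩
          · intro h; exact ⟨(this.mpr h).1.2, (this.mpr h).2.2⟩
    · push_neg at hx
      -- every point is in ≤ c many members; find a big disjoint subfamily
      obtain ⟨B, hBmax⟩ := zorn_subset
        {B : Set (Finset α) | B ⊆ A ∧ ∀ F ∈ B, ∀ G ∈ B, F ≠ G → F ∩ G = ∅}
        (by
          intro ch hch hchain
          refine ⟨⋃₀ ch, ⟨?_, ?_⟩, fun s hs => Set.subset_sUnion_of_mem hs⟩
          · intro F hF; obtain ⟨b, hb, hFb⟩ := hF; exact (hch hb).1 hFb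
          · rintro F ⟨b1, hb1, hF⟩ G ⟨b2, hb2, hG⟩ hFG
            rcases hchain.total hb1 hb2 with h | h
            · exact (hch hb2).2 F (h hF) G hG hFG
            · exact (hch hb1).2 F hF G (h hG) hFG)
      rcases lt_or_ge c #B with hB | hB
      · exact ⟨∅, B, hBmax.1.1, hB, hBmax.1.2⟩
      · exfalso
        set T : Set α := ⋃ F ∈ B, (↑F : Set α) with hT
        have hTle : #T ≤ c := by
          calc #T ≤ #B * ⨆ F : B, #((F : Finset α) : Set α) := Cardinal.mk_biUnion_le _ _
            _ ≤ c * c := by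
                refine mul_le_mul' hB (ciSup_le' fun F => ?_)
                exact le_trans (Cardinal.mk_le_aleph0) hc
            _ = c := Cardinal.mul_eq_self hc
        have hcover : A ⊆ B ∪ ⋃ x ∈ T, {F | F ∈ A ∧ x ∈ F} := by
          intro F hF
          by_cases hFB : F ∈ B
          · exact Or.inl hFB
          by_cases hFT : ∃ x ∈ F, x ∈ T
          · obtain ⟨x, hx1, hx2⟩ := hFT
            exact Or.inr (Set.mem_biUnion hx2 ⟨hF, hx1⟩)
          · exfalso
            push_neg at hFT
            have hmem : B ∪ {F} ∈ {B : Set (Finset α) | B ⊆ A ∧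
                ∀ F ∈ B, ∀ G ∈ B, F ≠ G → F ∩ G = ∅} := by
              constructor
              · intro G hG
                rcases hG with hG | hG
                · exact hBmax.1.1 hG
                · rw [Set.mem_singleton_iff] at hG; subst hG; exact hF
              · have key : ∀ G ∈ B, F ∩ G = ∅ := by
                  intro G hG
                  rw [Finset.eq_empty_iff_forall_notMem]
                  intro a ha
                  rw [Finset.mem_inter] at ha
                  exact hFT a ha.1 (Set.mem_biUnion hG ha.2)
                rintro F' (hF' | hF') G' (hG' | hG') hne
                · exact hBmax.1.2 F' hF' G' hG' hne
                · rw [Set.mem_singleton_iff] at hG'; subst hG'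
                  rw [Finset.inter_comm]; exact key F' hF'
                · rw [Set.mem_singleton_iff] at hF'; subst hF'
                  exact key G' hG'
                · rw [Set.mem_singleton_iff] at hF' hG'; subst hF'; subst hG'
                  exact absurd rfl hne
            have := hBmax.2 hmem (Set.subset_union_left)
            exact hFB (this (Or.inr rfl))
        have hA_le : #A ≤ c := by
          calc #A ≤ #(B ∪ ⋃ x ∈ T, {F | F ∈ A ∧ x ∈ F} : Set (Finset α)) :=
              Cardinal.mk_le_mk_of_subset hcover
            _ ≤ #B + #(⋃ x ∈ T, {F | F ∈ A ∧ x ∈ F}) := Cardinal.mk_union_le _ _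
            _ ≤ c + c * c := by
                refine add_le_add hB ?_
                calc #(⋃ x ∈ T, {F | F ∈ A ∧ x ∈ F}) ≤
                    #T * ⨆ x : T, #{F | F ∈ A ∧ (x : α) ∈ F} := Cardinal.mk_biUnion_le _ _
                  _ ≤ c * c := mul_le_mul' hTle (ciSup_le' fun x => hx x)
            _ = c := by rw [Cardinal.mul_eq_self hc, Cardinal.add_eq_self hc]
        exact absurd hA (not_lt.mpr hA_le)

lemma delta_system {α : Type u} [DecidableEq α] (c : Cardinal.{u}) (hc : Cardinal.aleph0 ≤ c)
    (A : Set (Finset α)) (hA : c < #A) :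
    ∃ (R : Finset α) (B : Set (Finset α)), B ⊆ A ∧ c < #B ∧
      ∀ F ∈ B, ∀ G ∈ B, F ≠ G → F ∩ G = R := by
  have hn : ∃ n, c < #{F | F ∈ A ∧ F.card = n} := by
    by_contra h
    push_neg at h
    have : #A ≤ c := by
      refine fiber_le (fun F : A => ULift.up.{u} (F : Finset α).card) c hc
        (le_trans Cardinal.mk_le_aleph0 hc) (fun n' => ?_)
      obtain ⟨n⟩ := n'
      have hinj : Function.Injective
          (fun x : ((fun F : A => ULift.up.{u} (F : Finset α).card) ⁻¹' {ULift.up n}) =>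
            (⟨x.1.1, x.1.2, congrArg ULift.down x.2⟩ : {F | F ∈ A ∧ F.card = n})) := by
        intro x y hxy
        simp only [Subtype.mk.injEq] at hxy
        exact Subtype.ext (Subtype.ext hxy)
      exact le_trans (Cardinal.mk_le_of_injective hinj) (h n)
    exact absurd hA (not_lt.mpr this)
  obtain ⟨n, hn⟩ := hn
  obtain ⟨R, B, hBsub, hBbig, hBΔ⟩ :=
    delta_fixed_card c hc n {F | F ∈ A ∧ F.card = n} (fun F hF => hF.2) hn
  exact ⟨R, B, fun F hF => (hBsub hF).1, hBbig, hBΔ⟩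


abbrev Cube (S : Type u) := S → (Set.Icc (0:ℝ) 1)

def rbox {S : Type u} (P : Finset (S × ℚ × ℚ)) : Set (Cube S) :=
  {x | ∀ t ∈ P, (t.2.1 : ℝ) < (x t.1 : ℝ) ∧ (x t.1 : ℝ) < (t.2.2 : ℝ)}

lemma rbox_def {S : Type u} (P : Finset (S × ℚ × ℚ)) (x : Cube S) :
    x ∈ rbox P ↔ ∀ t ∈ P, (t.2.1 : ℝ) < (x t.1 : ℝ) ∧ (x t.1 : ℝ) < (t.2.2 : ℝ) := Iff.rfl

lemma rbox_extract {S : Type u} {U : Set (Cube S)} (hU : IsOpen U) {p : Cube S} (hp : p ∈ U) :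
    ∃ P : Finset (S × ℚ × ℚ), p ∈ rbox P ∧ rbox P ⊆ U := by
  classical
  obtain ⟨I, u, hu, hsub⟩ := isOpen_pi_iff.mp hU p hp
  have key : ∀ s ∈ I, ∃ a b : ℚ, ((a:ℝ) < (p s : ℝ) ∧ ((p s : ℝ) < b)) ∧
      ∀ y : Set.Icc (0:ℝ) 1, (a:ℝ) < (y:ℝ) → (y:ℝ) < b → y ∈ u s := by
    intro s hs
    obtain ⟨huo, hpu⟩ := hu s hs
    obtain ⟨v, hv, hveq⟩ := isOpen_induced_iff.mp huo
    rw [← hveq] at hpu ⊢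
    obtain ⟨ε, hε, hball⟩ := Metric.isOpen_iff.mp hv _ hpu
    obtain ⟨a, ha1, ha2⟩ := exists_rat_btwn (show (p s : ℝ) - ε < (p s : ℝ) by linarith)
    obtain ⟨b, hb1, hb2⟩ := exists_rat_btwn (show (p s : ℝ) < (p s : ℝ) + ε by linarith)
    refine ⟨a, b, ⟨ha2, hb1⟩, fun y hy1 hy2 => ?_⟩
    apply hball
    rw [Metric.mem_ball, Real.dist_eq, abs_lt]
    constructor <;> linarith
  choose a b hab hmem using key
  refine ⟨I.attach.image (fun s => (s.1, a s.1 s.2, b s.1 s.2)), ?_, ?_⟩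
  · rintro t ht
    simp only [Finset.mem_image, Finset.mem_attach, true_and] at ht
    obtain ⟨⟨s, hs⟩, rfl⟩ := ht
    exact hab s hs
  · intro x hx
    apply hsub
    intro s hs
    have ht : (s, a s hs, b s hs) ∈ I.attach.image (fun s => (s.1, a s.1 s.2, b s.1 s.2)) :=
      Finset.mem_image.mpr ⟨⟨s, hs⟩, Finset.mem_attach _ _, rfl⟩
    obtain ⟨h1, h2⟩ := hx _ ht
    exact hmem s hs (x s) h1 h2



-- countability of patterns with support in a fixed finset
lemma patterns_le {S : Type u} (R : Finset S) (c : Cardinal.{u}) (hc : Cardinal.aleph0 ≤ c) :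
    #{Q : Finset (S × ℚ × ℚ) | ∀ t ∈ Q, t.1 ∈ R} ≤ c := by
  classical
  set T : Set (S × ℚ × ℚ) := {t | t.1 ∈ R} with hT
  have hTc : T.Countable := by
    have : T = (↑R : Set S) ×ˢ (Set.univ : Set (ℚ × ℚ)) := by
      ext t; simp [hT, Set.mem_prod]
    rw [this]
    exact Set.Countable.prod (R.countable_toSet) Set.countable_univ
  have hbig : {t : Set (S × ℚ × ℚ) | t.Finite ∧ t ⊆ T}.Countable :=
    Set.countable_setOf_finite_subset hTc
  have hinj : Function.Injective (fun Q : {Q : Finset (S × ℚ × ℚ) | ∀ t ∈ Q, t.1 ∈ R} =>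
      (⟨(↑(Q : Finset (S × ℚ × ℚ)) : Set (S × ℚ × ℚ)), Q.1.finite_toSet,
        fun t ht => Q.2 t ht⟩ : {t : Set (S × ℚ × ℚ) | t.Finite ∧ t ⊆ T})) := by
    intro Q Q' h
    simp only [Subtype.mk.injEq, Finset.coe_inj] at h
    exact Subtype.ext h
  haveI := hbig.to_subtype
  exact le_trans (Cardinal.mk_le_of_injective hinj) (le_trans Cardinal.mk_le_aleph0 hc)

theorem cube_propIII (c : Cardinal.{u}) (hc : Cardinal.aleph0 ≤ c) (S : Type u)
    (I : Type u) (U : I → Set (Cube S)) (hop : ∀ i, IsOpen (U i))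
    (hne : ∀ i, (U i).Nonempty) (hpt : ∀ x : Cube S, #{i | x ∈ U i} ≤ c) : #I ≤ c := by
  classical
  by_contra hbig
  push_neg at hbig
  choose p hp using hne
  have hPex : ∀ i, ∃ P : Finset (S × ℚ × ℚ), p i ∈ rbox P ∧ rbox P ⊆ U i :=
    fun i => rbox_extract (hop i) (hp i)
  choose P hP1 hP2 using hPex
  set supp : I → Finset S := fun i => (P i).image Prod.fst with hsupp
  -- pattern fibers are small
  have hpatfib : ∀ Q : Finset (S × ℚ × ℚ), #((fun i => P i) ⁻¹' {Q}) ≤ c := by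
    intro Q
    rcases Set.eq_empty_or_nonempty ((fun i => P i) ⁻¹' {Q}) with he | ⟨i₀, hi₀⟩
    · rw [he]; simp
    · have hx : ∀ i ∈ (fun i => P i) ⁻¹' {Q}, p i₀ ∈ U i := by
        intro i hi
        apply hP2 i
        have : P i = Q := hi
        rw [this]
        have : P i₀ = Q := hi₀
        rw [← this]
        exact hP1 i₀
      exact le_trans (Cardinal.mk_le_mk_of_subset hx) (hpt (p i₀))
  -- support fibers are small
  have hsuppfib : ∀ F : Finset S, #(supp ⁻¹' {F}) ≤ c := by
    intro F
    set V : Set (Finset (S × ℚ × ℚ)) := {Q | ∀ t ∈ Q, t.1 ∈ F} with hV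
    have hVle : #V ≤ c := patterns_le F c hc
    refine fiber_le (fun i : supp ⁻¹' {F} => (⟨P i.1, ?_⟩ : V)) c hc hVle ?_
    · intro t ht
      have : t.1 ∈ supp i.1 := Finset.mem_image_of_mem Prod.fst ht
      rwa [i.2] at this
    · intro Q
      have hinj : Function.Injective
          (fun x : ((fun i : supp ⁻¹' {F} => (⟨P i.1, by
              intro t ht
              have : t.1 ∈ supp i.1 := Finset.mem_image_of_mem Prod.fst ht
              rwa [i.2] at this⟩ : V)) ⁻¹' {Q}) =>
            (⟨x.1.1, show P x.1.1 = Q.1 from congrArg Subtype.val x.2⟩ :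
              ((fun i => P i) ⁻¹' {(Q : Finset (S × ℚ × ℚ))}))) := by
        intro x y h
        simp only [Subtype.mk.injEq] at h
        have h' := congrArg Subtype.val h
        exact Subtype.ext (Subtype.ext h')
      exact le_trans (Cardinal.mk_le_of_injective hinj) (hpatfib Q.1)
  -- the set of supports is big
  set 𝔉 : Set (Finset S) := Set.range supp with h𝔉
  have h𝔉big : c < #𝔉 := by
    by_contra h
    push_neg at h
    refine absurd (fiber_le (fun i : I => (⟨supp i, Set.mem_range_self i⟩ : 𝔉)) c hc h ?_)
      (not_le.mpr hbig)
    intro F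
    have hsub2 : (fun i : I => (⟨supp i, Set.mem_range_self i⟩ : 𝔉)) ⁻¹' {F} ⊆
        supp ⁻¹' {F.1} := by
      intro i hi
      exact congrArg Subtype.val hi
    exact le_trans (Cardinal.mk_le_mk_of_subset hsub2) (hsuppfib F.1)
  -- Δ-system
  obtain ⟨R, 𝔅, h𝔅sub, h𝔅big, hΔ⟩ := delta_system c hc 𝔉 h𝔉big
  -- pick representative indices
  have : ∀ F : 𝔅, ∃ i, supp i = F.1 := fun F => h𝔅sub F.2
  choose idx hidx using this
  -- root patterns
  set r : 𝔅 → Finset (S × ℚ × ℚ) := fun F => (P (idx F)).filter (fun t => t.1 ∈ R) with hr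
  set V : Set (Finset (S × ℚ × ℚ)) := {Q | ∀ t ∈ Q, t.1 ∈ R} with hV
  have hrV : ∀ F, r F ∈ V := by
    intro F t ht
    exact (Finset.mem_filter.mp ht).2
  have hQ : ∃ Q : V, c < #((fun F => (⟨r F, hrV F⟩ : V)) ⁻¹' {Q}) := by
    by_contra h
    push_neg at h
    exact absurd (fiber_le _ c hc (patterns_le R c hc) h) (not_le.mpr h𝔅big)
  obtain ⟨Q₀, hQ₀⟩ := hQ
  set G' : Set 𝔅 := (fun F => (⟨r F, hrV F⟩ : V)) ⁻¹' {Q₀} with hG'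
  have hrG : ∀ F ∈ G', r F = Q₀.1 := fun F hF => congrArg Subtype.val hF
  -- construct the common point
  set x : Cube S := fun s =>
    if h : ∃ F : 𝔅, F ∈ G' ∧ s ∈ F.1 then p (idx h.choose) s else ⟨0, by norm_num⟩ with hxdef
  have hxbox : ∀ F ∈ G', x ∈ rbox (P (idx F)) := by
    intro F hF
    rw [rbox_def]
    intro t ht
    set s := t.1 with hs
    have hsF : s ∈ F.1 := by
      rw [← hidx F]
      exact Finset.mem_image_of_mem Prod.fst ht
    have hex : ∃ F' : 𝔅, F' ∈ G' ∧ s ∈ F'.1 := ⟨F, hF, hsF⟩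
    have hxs : x s = p (idx hex.choose) s := by
      simp only [hxdef]
      rw [dif_pos hex]
    obtain ⟨hch1, hch2⟩ := hex.choose_spec
    by_cases hsR : s ∈ R
    · -- on the root, the chosen pattern agrees
      have ht' : t ∈ r F := Finset.mem_filter.mpr ⟨ht, hsR⟩
      rw [hrG F hF, ← hrG _ hch1] at ht'
      have : t ∈ P (idx hex.choose) := (Finset.mem_filter.mp ht').1
      have := (rbox_def _ _).mp (hP1 (idx hex.choose)) t this
      rwa [hxs]
    · -- off the root, the witness must be F itself
      have hFeq : hex.choose = F := by
        by_contra hne'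
        have hne'' : (hex.choose : Finset S) ≠ F.1 := by
          intro h; exact hne' (Subtype.ext h)
        have hint := hΔ _ hex.choose.2 _ F.2 hne''
        have : s ∈ (hex.choose : Finset S) ∩ F.1 := Finset.mem_inter.mpr ⟨hch2, hsF⟩
        rw [hint] at this
        exact hsR this
      rw [hFeq] at hxs
      have := (rbox_def _ _).mp (hP1 (idx F)) t ht
      rwa [hxs]
  -- conclude
  have hinto : ∀ F : G', x ∈ U (idx F.1) := fun F => hP2 _ (hxbox F.1 F.2)
  have hinj : Function.Injective (fun F : G' => (⟨idx F.1, hinto F⟩ : {i | x ∈ U i})) := by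
    intro F F' h
    simp only [Subtype.mk.injEq] at h
    have : (F.1 : Finset S) = (F'.1 : Finset S) := by
      rw [← hidx F.1, ← hidx F'.1, h]
    exact Subtype.ext (Subtype.ext this)
  exact absurd (le_trans (Cardinal.mk_le_of_injective hinj) (hpt x)) (not_le.mpr hQ₀)


theorem cube_dense (c : Cardinal.{u}) (hc : Cardinal.aleph0 ≤ c) (S : Type u)
    (hS : 2 ^ c < #S) (D : Set (Cube S)) (hD : Dense D) : c < #D := by
  classical
  by_contra h
  push_neg at h
  set φ : S → Set D := fun s => {d : D | (1/2 : ℝ) < ((d : Cube S) s : ℝ)} with hφ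
  have hφinj : Function.Injective φ := by
    intro s t hst
    by_contra hne
    set V : Set (Cube S) := {x | (1/2 : ℝ) < (x s : ℝ)} ∩ {x | (x t : ℝ) < (1/2 : ℝ)} with hV
    have hVopen : IsOpen V := by
      apply IsOpen.inter
      · exact isOpen_lt continuous_const (continuous_subtype_val.comp (continuous_apply s))
      · exact isOpen_lt (continuous_subtype_val.comp (continuous_apply t)) continuous_const
    have hVne : V.Nonempty := by
      refine ⟨fun u => if u = s then ⟨1, by norm_num⟩ else ⟨0, by norm_num⟩, ?_, ?_⟩
      · simp only [Set.mem_setOf_eq, if_pos rfl]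
        norm_num
      · simp only [Set.mem_setOf_eq, if_neg (Ne.symm hne)]
        norm_num
    obtain ⟨d, hdD, hdV⟩ := hD.exists_mem_open hVopen hVne
    have h1 : (⟨d, hdD⟩ : D) ∈ φ s := hdV.1
    have h2 : (⟨d, hdD⟩ : D) ∉ φ t := by
      intro hmem
      have : (1/2 : ℝ) < (d t : ℝ) := hmem
      have := hdV.2
      simp only [Set.mem_setOf_eq] at this
      linarith
    rw [hst] at h1
    exact h2 h1
  have : #S ≤ 2 ^ c := by
    calc #S ≤ #(Set D) := Cardinal.mk_le_of_injective hφinj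
      _ = 2 ^ #D := Cardinal.mk_set
      _ ≤ 2 ^ c := by
          exact Cardinal.power_le_power_left (by norm_num) h
  exact absurd hS (not_lt.mpr this)


theorem stmt5 (c : Cardinal.{u}) (hc : Cardinal.aleph0 ≤ c)
    (S : Type u) (hS : 2 ^ c < #S) :
    PropIII c (S → (Set.Icc (0:ℝ) 1)) ∧
      ∀ D : Set (S → (Set.Icc (0:ℝ) 1)), Dense D → c < #D := by
  constructor
  · intro I U hop hne hpt
    exact cube_propIII c hc S I U hop hne hpt
  · intro D hD
    exact cube_dense c hc S hS D hD
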